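/- Consider the level gadget on nodes u₁,…,u_ℓ (first level) and v₁,…,v_{ℓ'} (second level) inside a DAG, where the gadget's edges are: (u_i,u_{i+1}) for i<ℓ, (v_i,v_{i+1}) for i<ℓ', (u_i,v_i) for i ≤ min(ℓ,ℓ'), (u_ℓ,v₁), and, if ℓ > ℓ', (u_i,v_{ℓ'}) for ℓ' < i ≤ ℓ; moreover all in-neighbors of the v-nodes lie in the gadget. In SPP with any memory bound r ≥ max(ℓ,ℓ')+1, from any configuration in which exactly the nodes u₁,…,u_ℓ of the gadget carry red pebbles, there is a sequence consisting only of (R3-S) and (R4-S) moves (no I/O) after which exactly v₁,…,v_{ℓ'} of the gadget carry red pebbles, such that at every intermediate configuration the number of red pebbles on the gadget is at most max(ℓ,ℓ')+1. -/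

import Mathlib

namespace SPP

variable {V : Type*} [DecidableEq V]

/-- A configuration of single-processor red-blue pebbling. -/
structure Conf (V : Type*) where
  red : Finset V
  blue : Finset V

/-- Moves of single-processor red-blue pebbling: `load` is (R1-S), `save` is
(R2-S), `compute` is (R3-S), and the removals are (R4-S). -/
inductive Move (V : Type*) where
  | load (v : V)
  | save (v : V)
  | compute (v : V)
  | removeRed (v : V)
  | removeBlue (v : V)

/-- The effect of a move on a configuration. -/
def apply : Move V → Conf V → Conf V
  | .load v, C => ⟨insert v C.red, C.blue⟩
  | .save v, C => ⟨C.red, insert v C.blue⟩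
  | .compute v, C => ⟨insert v C.red, C.blue⟩
  | .removeRed v, C => ⟨C.red.erase v, C.blue⟩
  | .removeBlue v, C => ⟨C.red, C.blue.erase v⟩

/-- When a move may legally be performed. -/
def Legal (E : V → V → Prop) : Conf V → Move V → Prop
  | C, .load v => v ∈ C.blue
  | C, .save v => v ∈ C.red
  | C, .compute v => ∀ u, E u v → u ∈ C.red
  | _, .removeRed _ => True
  | _, .removeBlue _ => True

/-- A configuration respects the fast-memory bound `r`. -/
def Valid (r : ℕ) (C : Conf V) : Prop := C.red.card ≤ r

/-- `Run E r C ms C'` : starting from configuration `C`, the list of moves `ms`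
may be legally executed (respecting the memory bound `r` throughout) and leads
to configuration `C'`. -/
inductive Run (E : V → V → Prop) (r : ℕ) : Conf V → List (Move V) → Conf V → Prop
  | nil (C : Conf V) : Run E r C [] C
  | cons {C C'' : Conf V} {mv : Move V} {ms : List (Move V)} :
      Legal E C mv → Valid r (apply mv C) → Run E r (apply mv C) ms C'' →
      Run E r C (mv :: ms) C''

def isIO : Move V → Bool
  | .load _ => true
  | .save _ => true
  | _ => false

/-- The number of I/O moves (of type (R1-S) or (R2-S)) in a sequence of moves. -/
def ioCount (ms : List (Move V)) : ℕ := (ms.filter isIO).length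

def isComputeOrRemove : Move V → Bool
  | .compute _ => true
  | .removeRed _ => true
  | .removeBlue _ => true
  | _ => false

/-- A sink of the DAG: a node with no outgoing edge. -/
def IsSink (E : V → V → Prop) (v : V) : Prop := ∀ u, ¬ E v u

/-- A terminal configuration: every sink carries a pebble. -/
def Terminal (E : V → V → Prop) (C : Conf V) : Prop :=
  ∀ v, IsSink E v → v ∈ C.blue ∨ v ∈ C.red

/-- The initial (empty) configuration. -/
def init (V : Type*) : Conf V := ⟨∅, ∅⟩

/-- `ms` is an SPP pebbling strategy with memory bound `r`. -/
def IsPebbling (E : V → V → Prop) (r : ℕ) (ms : List (Move V)) : Prop :=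
  ∃ Cf, Run E r (init V) ms Cf ∧ Terminal E Cf

end SPP


private lemma SPP18.card_filter_lt {V : Type} [DecidableEq V] (n i : ℕ) :
    ((Finset.univ : Finset (Fin n)).filter (fun j : Fin n => (j:ℕ) < i)).card = min i n := by
  rw [← Finset.card_image_of_injective _ Fin.val_injective]
  have h : ((Finset.univ : Finset (Fin n)).filter (fun j : Fin n => (j:ℕ) < i)).image Fin.val
      = Finset.range (min i n) := by
    ext x
    simp only [Finset.mem_image, Finset.mem_filter, Finset.mem_range, Finset.mem_univ, true_and]
    constructor
    · rintro ⟨a, ha, rfl⟩; omega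
    · intro hx; exact ⟨⟨x, by omega⟩, by simp; omega, rfl⟩
  rw [h, Finset.card_range]

private lemma SPP18.card_filter_ge {V : Type} [DecidableEq V] (n i : ℕ) :
    ((Finset.univ : Finset (Fin n)).filter (fun j : Fin n => i ≤ (j:ℕ))).card = n - i := by
  rw [← Finset.card_image_of_injective _ Fin.val_injective]
  have h : ((Finset.univ : Finset (Fin n)).filter (fun j : Fin n => i ≤ (j:ℕ))).image Fin.val
      = Finset.Ico i n := by
    ext x
    simp only [Finset.mem_image, Finset.mem_filter, Finset.mem_Ico, Finset.mem_univ, true_and]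
    constructor
    · rintro ⟨a, ha, rfl⟩; exact ⟨ha, a.isLt⟩
    · intro hx; exact ⟨⟨x, hx.2⟩, hx.1, rfl⟩
  rw [h, Nat.card_Ico]

/-- the level gadget. Inside a DAG `(V, E)`, consider nodes
`u 0, …, u (ℓ−1)` (first level) and `v 0, …, v (ℓ'−1)` (second level, 0-based)
whose gadget edges are: `(u i, u (i+1))`, `(v i, v (i+1))`, `(u i, v i)` for
`i < min ℓ ℓ'`, `(u (ℓ−1), v 0)`, and, if `ℓ > ℓ'`, `(u i, v (ℓ'−1))` for
`ℓ' ≤ i < ℓ`; moreover all in-neighbors of the `v`-nodes lie in the gadget (the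
hypothesis `hin` characterizes the in-neighborhood of each `v i` exactly). In
SPP with any memory bound `r ≥ max ℓ ℓ' + 1`, from any configuration whose red
pebbles are exactly `u 0, …, u (ℓ−1)`, there is a sequence consisting only of
(R3-S) and (R4-S) moves (no I/O) after which exactly `v 0, …, v (ℓ'−1)` carry
red pebbles, such that at every intermediate configuration the number of red
pebbles is at most `max ℓ ℓ' + 1`. -/
theorem stmt18 {V : Type} [Fintype V] [DecidableEq V] (E : V → V → Prop)
    (hdag : Irreflexive (Relation.TransGen E))
    (ℓ ℓ' r : ℕ) (hℓ : 0 < ℓ) (hℓ' : 0 < ℓ') (hr : max ℓ ℓ' + 1 ≤ r)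
    (u : Fin ℓ → V) (v : Fin ℓ' → V)
    (hu : Function.Injective u) (hv : Function.Injective v)
    (hdisj : ∀ i j, u i ≠ v j)
    (hchainU : ∀ i i' : Fin ℓ, (i' : ℕ) = (i : ℕ) + 1 → E (u i) (u i'))
    (hin : ∀ (i : Fin ℓ') (x : V), E x (v i) ↔
        ((∃ i' : Fin ℓ', x = v i' ∧ (i : ℕ) = (i' : ℕ) + 1) ∨
         (∃ j : Fin ℓ, x = u j ∧
            ((j : ℕ) = (i : ℕ) ∨ ((j : ℕ) = ℓ - 1 ∧ (i : ℕ) = 0) ∨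
             (ℓ' < ℓ ∧ ℓ' ≤ (j : ℕ) ∧ (i : ℕ) = ℓ' - 1)))))
    (C : SPP.Conf V) (hC : (C.red : Set V) = Set.range u) :
    ∃ ms : List (SPP.Move V),
      (∀ mv ∈ ms, SPP.isComputeOrRemove mv = true) ∧
      ∃ C' : SPP.Conf V, SPP.Run E r C ms C' ∧
        (C'.red : Set V) = Set.range v ∧ C'.blue = C.blue ∧
        ∀ D ∈ ms.scanl (fun Cc mv => SPP.apply mv Cc) C,
          D.red.card ≤ max ℓ ℓ' + 1 := by
    classical
  set M := max ℓ ℓ' with hM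
  set R : ℕ → Finset V := fun i =>
    ((Finset.univ : Finset (Fin ℓ')).filter (fun j : Fin ℓ' => (j:ℕ) < i)).image v ∪
    ((Finset.univ : Finset (Fin ℓ)).filter (fun j : Fin ℓ => i ≤ (j:ℕ))).image u with hRdef
  have memR : ∀ (i : ℕ) (x : V), x ∈ R i ↔
      ((∃ j : Fin ℓ', (j:ℕ) < i ∧ v j = x) ∨ (∃ j : Fin ℓ, i ≤ (j:ℕ) ∧ u j = x)) := by
    intro i x
    simp [hRdef, Finset.mem_union, Finset.mem_image, Finset.mem_filter]
  have cardR : ∀ i, (R i).card = min i ℓ' + (ℓ - i) := by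
    intro i
    rw [hRdef]
    have hdis : Disjoint
        (((Finset.univ : Finset (Fin ℓ')).filter (fun j : Fin ℓ' => (j:ℕ) < i)).image v)
        (((Finset.univ : Finset (Fin ℓ)).filter (fun j : Fin ℓ => i ≤ (j:ℕ))).image u) := by
      rw [Finset.disjoint_left]
      intro x hx hx'
      simp only [Finset.mem_image, Finset.mem_filter, Finset.mem_univ, true_and] at hx hx'
      obtain ⟨j, _, rfl⟩ := hx
      obtain ⟨j', _, h⟩ := hx'
      exact hdisj j' j h
    rw [Finset.card_union_of_disjoint hdis, Finset.card_image_of_injective _ hv,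
        Finset.card_image_of_injective _ hu, SPP18.card_filter_lt (V := V),
        SPP18.card_filter_ge (V := V)]
  have hcardR_le : ∀ i, (R i).card ≤ M := by
    intro i; rw [cardR]; omega
  have vnot : ∀ (i : ℕ) (h1 : i < ℓ'), v ⟨i, h1⟩ ∉ R i := by
    intro i h1 hmem
    rw [memR] at hmem
    rcases hmem with ⟨j, hj, hje⟩ | ⟨j, hj, hje⟩
    · have h2 := congrArg Fin.val (hv hje)
      simp only [Fin.val_mk] at h2
      omega
    · exact hdisj j ⟨i, h1⟩ hje
  have stepA : ∀ (i : ℕ) (h1 : i < ℓ') (h2 : i < ℓ),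
      (insert (v ⟨i, h1⟩) (R i)).erase (u ⟨i, h2⟩) = R (i + 1) := by
    intro i h1 h2
    ext x
    rw [Finset.mem_erase, Finset.mem_insert, memR, memR]
    constructor
    · rintro ⟨hne, rfl | (⟨j, hj, rfl⟩ | ⟨j, hj, rfl⟩)⟩
      · exact Or.inl ⟨⟨i, h1⟩, by show i < i + 1; omega, rfl⟩
      · exact Or.inl ⟨j, by omega, rfl⟩
      · refine Or.inr ⟨j, ?_, rfl⟩
        have hji : (j : ℕ) ≠ i := fun h => hne (by rw [show j = (⟨i, h2⟩ : Fin ℓ) from Fin.ext h])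
        omega
    · rintro (⟨j, hj, rfl⟩ | ⟨j, hj, rfl⟩)
      · refine ⟨fun h => hdisj ⟨i, h2⟩ j h.symm, ?_⟩
        by_cases hji : (j : ℕ) < i
        · exact Or.inr (Or.inl ⟨j, hji, rfl⟩)
        · have hje : j = (⟨i, h1⟩ : Fin ℓ') := Fin.ext (by show (j : ℕ) = i; omega)
          exact Or.inl (by rw [hje])
      · refine ⟨fun h => ?_, Or.inr (Or.inr ⟨j, by omega, rfl⟩)⟩
        have h3 := congrArg Fin.val (hu h)
        simp only [Fin.val_mk] at h3
        omega
  have stepB : ∀ (i : ℕ) (h1 : i < ℓ') (h2 : ℓ ≤ i),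
      insert (v ⟨i, h1⟩) (R i) = R (i + 1) := by
    intro i h1 h2
    ext x
    rw [Finset.mem_insert, memR, memR]
    constructor
    · rintro (rfl | (⟨j, hj, rfl⟩ | ⟨j, hj, rfl⟩))
      · exact Or.inl ⟨⟨i, h1⟩, by show i < i + 1; omega, rfl⟩
      · exact Or.inl ⟨j, by omega, rfl⟩
      · exact absurd j.isLt (by omega)
    · rintro (⟨j, hj, rfl⟩ | ⟨j, hj, rfl⟩)
      · by_cases hji : (j : ℕ) < i
        · exact Or.inr (Or.inl ⟨j, hji, rfl⟩)
        · have hje : j = (⟨i, h1⟩ : Fin ℓ') := Fin.ext (by show (j : ℕ) = i; omega)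
          exact Or.inl (by rw [hje])
      · exact absurd j.isLt (by omega)
  have stepC : ∀ (i : ℕ) (h1 : ℓ' ≤ i) (h2 : i < ℓ),
      (R i).erase (u ⟨i, h2⟩) = R (i + 1) := by
    intro i h1 h2
    ext x
    rw [Finset.mem_erase, memR, memR]
    constructor
    · rintro ⟨hne, ⟨j, hj, rfl⟩ | ⟨j, hj, rfl⟩⟩
      · exact Or.inl ⟨j, by omega, rfl⟩
      · refine Or.inr ⟨j, ?_, rfl⟩
        have hji : (j : ℕ) ≠ i := fun h => hne (by rw [show j = (⟨i, h2⟩ : Fin ℓ) from Fin.ext h])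
        omega
    · rintro (⟨j, hj, rfl⟩ | ⟨j, hj, rfl⟩)
      · exact ⟨fun h => hdisj ⟨i, h2⟩ j h.symm, Or.inl ⟨j, by omega, rfl⟩⟩
      · refine ⟨fun h => ?_, Or.inr ⟨j, by omega, rfl⟩⟩
        have h3 := congrArg Fin.val (hu h)
        simp only [Fin.val_mk] at h3
        omega
  have legal : ∀ (i : ℕ) (h1 : i < ℓ') (B : Finset V),
      SPP.Legal E ⟨R i, B⟩ (SPP.Move.compute (v ⟨i, h1⟩)) := by
    intro i h1 B x hx
    rw [hin ⟨i, h1⟩ x] at hx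
    show x ∈ R i
    rw [memR]
    rcases hx with ⟨i', rfl, hi'⟩ | ⟨j, rfl, hj⟩
    · have h3 : i = (i' : ℕ) + 1 := hi'
      exact Or.inl ⟨i', by omega, rfl⟩
    · have hj' : ((j : ℕ) = i ∨ ((j : ℕ) = ℓ - 1 ∧ i = 0) ∨
          (ℓ' < ℓ ∧ ℓ' ≤ (j : ℕ) ∧ i = ℓ' - 1)) := hj
      exact Or.inr ⟨j, by omega, rfl⟩
  have key : ∀ (k i : ℕ), i + k = M → ∃ ms : List (SPP.Move V),
      (∀ mv ∈ ms, SPP.isComputeOrRemove mv = true) ∧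
      SPP.Run E r ⟨R i, C.blue⟩ ms ⟨R M, C.blue⟩ ∧
      ∀ D ∈ ms.scanl (fun Cc mv => SPP.apply mv Cc) ⟨R i, C.blue⟩, D.red.card ≤ M + 1 := by
    intro k
    induction k with
    | zero =>
      intro i hi
      have hiM : i = M := by omega
      subst hiM
      refine ⟨[], by simp, SPP.Run.nil _, ?_⟩
      intro D hD
      simp only [List.scanl_nil, List.scanl_cons, List.mem_cons, List.not_mem_nil, or_false] at hD
      subst hD
      exact le_trans (hcardR_le M) (by omega)
    | succ k ih =>
      intro i hi
      obtain ⟨ms, hms1, hms2, hms3⟩ := ih (i + 1) (by omega)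
      by_cases h1 : i < ℓ'
      · by_cases h2 : i < ℓ
        · refine ⟨SPP.Move.compute (v ⟨i, h1⟩) :: SPP.Move.removeRed (u ⟨i, h2⟩) :: ms,
            ?_, ?_, ?_⟩
          · intro mv hmv
            simp only [List.mem_cons] at hmv
            rcases hmv with rfl | rfl | h
            · rfl
            · rfl
            · exact hms1 mv h
          · refine SPP.Run.cons (legal i h1 C.blue) ?_ ?_
            · show (insert (v ⟨i, h1⟩) (R i)).card ≤ r
              rw [Finset.card_insert_of_notMem (vnot i h1)]
              have := hcardR_le i; omega
            · refine SPP.Run.cons trivial ?_ ?_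
              · show ((insert (v ⟨i, h1⟩) (R i)).erase (u ⟨i, h2⟩)).card ≤ r
                rw [stepA i h1 h2]
                have := hcardR_le (i + 1); omega
              · show SPP.Run E r ⟨(insert (v ⟨i, h1⟩) (R i)).erase (u ⟨i, h2⟩), C.blue⟩
                  ms ⟨R M, C.blue⟩
                rw [stepA i h1 h2]
                exact hms2
          · intro D hD
            simp only [List.scanl_nil, List.scanl_cons, SPP.apply, List.mem_cons] at hD
            rcases hD with rfl | rfl | hD
            · exact le_trans (hcardR_le i) (by omega)
            · show (insert (v ⟨i, h1⟩) (R i)).card ≤ M + 1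
              rw [Finset.card_insert_of_notMem (vnot i h1)]
              have := hcardR_le i; omega
            · rw [stepA i h1 h2] at hD
              exact hms3 D hD
        · refine ⟨SPP.Move.compute (v ⟨i, h1⟩) :: ms, ?_, ?_, ?_⟩
          · intro mv hmv
            simp only [List.mem_cons] at hmv
            rcases hmv with rfl | h
            · rfl
            · exact hms1 mv h
          · refine SPP.Run.cons (legal i h1 C.blue) ?_ ?_
            · show (insert (v ⟨i, h1⟩) (R i)).card ≤ r
              rw [Finset.card_insert_of_notMem (vnot i h1)]
              have := hcardR_le i; omega
            · show SPP.Run E r ⟨insert (v ⟨i, h1⟩) (R i), C.blue⟩ ms ⟨R M, C.blue⟩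
              rw [stepB i h1 (by omega)]
              exact hms2
          · intro D hD
            simp only [List.scanl_nil, List.scanl_cons, SPP.apply, List.mem_cons] at hD
            rcases hD with rfl | hD
            · exact le_trans (hcardR_le i) (by omega)
            · rw [stepB i h1 (by omega)] at hD
              exact hms3 D hD
      · have h2 : i < ℓ := by omega
        refine ⟨SPP.Move.removeRed (u ⟨i, h2⟩) :: ms, ?_, ?_, ?_⟩
        · intro mv hmv
          simp only [List.mem_cons] at hmv
          rcases hmv with rfl | h
          · rfl
          · exact hms1 mv h
        · refine SPP.Run.cons trivial ?_ ?_
          · show ((R i).erase (u ⟨i, h2⟩)).card ≤ r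
            rw [stepC i (by omega) h2]
            have := hcardR_le (i + 1); omega
          · show SPP.Run E r ⟨(R i).erase (u ⟨i, h2⟩), C.blue⟩ ms ⟨R M, C.blue⟩
            rw [stepC i (by omega) h2]
            exact hms2
        · intro D hD
          simp only [List.scanl_nil, List.scanl_cons, SPP.apply, List.mem_cons] at hD
          rcases hD with rfl | hD
          · exact le_trans (hcardR_le i) (by omega)
          · rw [stepC i (by omega) h2] at hD
            exact hms3 D hD
  obtain ⟨ms, hms1, hms2, hms3⟩ := key M 0 (by omega)
  have hC0 : C = ⟨R 0, C.blue⟩ := by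
    have hred : C.red = R 0 := by
      apply Finset.coe_injective
      rw [hC]
      ext x
      rw [Finset.mem_coe, memR]
      simp [Set.mem_range, eq_comm]
    cases C
    simp only at hred
    rw [hred]
  refine ⟨ms, hms1, ⟨R M, C.blue⟩, ?_, ?_, rfl, ?_⟩
  · rw [hC0]; exact hms2
  · ext x
    rw [Finset.mem_coe, memR]
    constructor
    · rintro (⟨j, hj, rfl⟩ | ⟨j, hj, rfl⟩)
      · exact ⟨j, rfl⟩
      · have := j.isLt; omega
    · rintro ⟨j, rfl⟩
      exact Or.inl ⟨j, by have := j.isLt; omega, rfl⟩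
  · rw [hC0]; exact hms3
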